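/- For every tree T with 3n vertices (n ≥ 1), the vertex set of T can be partitioned into three sets of size n each, each carrying a tree structure whose every edge joins two vertices at distance at most 2 in T. -/

import Mathlib

set_option linter.unusedSectionVars false

open Finset
open scoped Classical

namespace TreePart

variable {V : Type*} [Fintype V] [DecidableEq V] (G : SimpleGraph V)

/-- adjacency step within a finite set -/
def stepRel (S : Finset V) (x y : V) : Prop := x ∈ S ∧ y ∈ S ∧ G.Adj x y

/-- distance-two step within a finite set -/
def step2Rel (S : Finset V) (x y : V) : Prop := x ∈ S ∧ y ∈ S ∧ G.dist x y ≤ 2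

def Conn1 (S : Finset V) : Prop :=
  ∀ x ∈ S, ∀ y ∈ S, Relation.ReflTransGen (stepRel G S) x y

def Conn2 (S : Finset V) : Prop :=
  ∀ x ∈ S, ∀ y ∈ S, Relation.ReflTransGen (step2Rel G S) x y

variable {G}

lemma stepRel_symm {S : Finset V} : Symmetric (stepRel G S) :=
  fun _ _ h => ⟨h.2.1, h.1, h.2.2.symm⟩

lemma step2Rel_symm {S : Finset V} : Symmetric (step2Rel G S) :=
  fun x y h => ⟨h.2.1, h.1, by rw [SimpleGraph.dist_comm]; exact h.2.2⟩

lemma rtg_symm {S : Finset V} {x y : V}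
    (h : Relation.ReflTransGen (stepRel G S) x y) :
    Relation.ReflTransGen (stepRel G S) y x :=
  by haveI : Std.Symm (stepRel G S) := ⟨fun _ _ h => stepRel_symm h⟩; exact Std.Symm.symm _ _ h

lemma rtg2_symm {S : Finset V} {x y : V}
    (h : Relation.ReflTransGen (step2Rel G S) x y) :
    Relation.ReflTransGen (step2Rel G S) y x :=
  by haveI : Std.Symm (step2Rel G S) := ⟨fun _ _ h => step2Rel_symm h⟩; exact Std.Symm.symm _ _ h

lemma rtg_mono {S T : Finset V} (hST : S ⊆ T) {x y : V}
    (h : Relation.ReflTransGen (stepRel G S) x y) :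
    Relation.ReflTransGen (stepRel G T) x y := by
  induction h with
  | refl => exact .refl
  | tail _ hstep ih => exact ih.tail ⟨hST hstep.1, hST hstep.2.1, hstep.2.2⟩

lemma rtg2_mono {S T : Finset V} (hST : S ⊆ T) {x y : V}
    (h : Relation.ReflTransGen (step2Rel G S) x y) :
    Relation.ReflTransGen (step2Rel G T) x y := by
  induction h with
  | refl => exact .refl
  | tail _ hstep ih => exact ih.tail ⟨hST hstep.1, hST hstep.2.1, hstep.2.2⟩

lemma adj_dist_le_one {x y : V} (h : G.Adj x y) : G.dist x y ≤ 1 := by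
  simpa using SimpleGraph.dist_le (h.toWalk)

lemma rtg_to_rtg2 {S : Finset V} {x y : V}
    (h : Relation.ReflTransGen (stepRel G S) x y) :
    Relation.ReflTransGen (step2Rel G S) x y := by
  induction h with
  | refl => exact .refl
  | tail _ hstep ih =>
      exact ih.tail ⟨hstep.1, hstep.2.1, le_trans (adj_dist_le_one hstep.2.2) one_le_two⟩

lemma Conn1.conn2 {S : Finset V} (h : Conn1 G S) : Conn2 G S :=
  fun x hx y hy => rtg_to_rtg2 (h x hx y hy)

/-- gluing two `Conn2` sets joined by a close pair -/
lemma conn2_union {S T : Finset V} (hS : Conn2 G S) (hT : Conn2 G T)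
    {a b : V} (ha : a ∈ S) (hb : b ∈ T) (hd : G.dist a b ≤ 2) :
    Conn2 G (S ∪ T) := by
  intro x hx y hy
  have hbridge : Relation.ReflTransGen (step2Rel G (S ∪ T)) a b :=
    Relation.ReflTransGen.single ⟨mem_union_left _ ha, mem_union_right _ hb, hd⟩
  have hto : ∀ z ∈ S ∪ T, Relation.ReflTransGen (step2Rel G (S ∪ T)) z a := by
    intro z hz
    rcases mem_union.1 hz with hzS | hzT
    · exact rtg2_mono subset_union_left (hS z hzS a ha)
    · have h1 : Relation.ReflTransGen (step2Rel G (S ∪ T)) b z :=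
        rtg2_mono subset_union_right (hT b hb z hzT)
      exact (hbridge.trans h1) |> rtg2_symm
  exact (hto x hx).trans (rtg2_symm (hto y hy))


section Comp

open Classical in
/-- connected component of `y` inside the finite set `S` -/
noncomputable def compIn (G : SimpleGraph V) (S : Finset V) (y : V) : Finset V :=
  S.filter (fun z => Relation.ReflTransGen (stepRel G S) y z)

lemma compIn_subset {S : Finset V} {y : V} : compIn G S y ⊆ S := filter_subset _ _

lemma mem_compIn {S : Finset V} {y z : V} :
    z ∈ compIn G S y ↔ z ∈ S ∧ Relation.ReflTransGen (stepRel G S) y z :=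
  Finset.mem_filter

lemma mem_compIn_self {S : Finset V} {y : V} (hy : y ∈ S) : y ∈ compIn G S y :=
  mem_compIn.2 ⟨hy, .refl⟩

lemma compIn_closed {S : Finset V} {y z w : V} (hz : z ∈ compIn G S y)
    (hw : w ∈ S) (hadj : G.Adj z w) : w ∈ compIn G S y := by
  rcases mem_compIn.1 hz with ⟨hzS, hrtg⟩
  exact mem_compIn.2 ⟨hw, hrtg.tail ⟨hzS, hw, hadj⟩⟩

lemma compIn_closed_rtg {S : Finset V} {y z w : V} (hz : z ∈ compIn G S y)
    (hw : w ∈ S) (hrtg : Relation.ReflTransGen (stepRel G S) z w) : w ∈ compIn G S y := by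
  rcases mem_compIn.1 hz with ⟨hzS, h1⟩
  exact mem_compIn.2 ⟨hw, h1.trans hrtg⟩

lemma mem_compIn_comm {S : Finset V} {y z : V} (hy : y ∈ S) (hz : z ∈ S) :
    z ∈ compIn G S y ↔ y ∈ compIn G S z := by
  simp only [mem_compIn]
  exact ⟨fun h => ⟨hy, rtg_symm h.2⟩, fun h => ⟨hz, rtg_symm h.2⟩⟩

lemma compIn_eq_of_mem {S : Finset V} {y z : V} (hz : z ∈ compIn G S y) :
    compIn G S z = compIn G S y := by
  rcases mem_compIn.1 hz with ⟨hzS, hrtg⟩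
  ext w
  simp only [mem_compIn]
  exact ⟨fun h => ⟨h.1, hrtg.trans h.2⟩, fun h => ⟨h.1, (rtg_symm hrtg).trans h.2⟩⟩

lemma rtg_in_compIn {S : Finset V} {y : V} (hy : y ∈ S) :
    ∀ {z}, Relation.ReflTransGen (stepRel G S) y z →
      Relation.ReflTransGen (stepRel G (compIn G S y)) y z := by
  intro z h
  induction h with
  | refl => exact .refl
  | @tail b w hyb hstep ih =>
      have hb : b ∈ compIn G S y := mem_compIn.2 ⟨hstep.1, hyb⟩
      have hw : w ∈ compIn G S y := compIn_closed hb hstep.2.1 hstep.2.2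
      exact ih.tail ⟨hb, hw, hstep.2.2⟩

lemma conn1_compIn {S : Finset V} {y : V} (hy : y ∈ S) : Conn1 G (compIn G S y) := by
  intro x hx z hz
  rcases mem_compIn.1 hx with ⟨_, hx2⟩
  rcases mem_compIn.1 hz with ⟨_, hz2⟩
  exact (rtg_symm (rtg_in_compIn hy hx2)).trans (rtg_in_compIn hy hz2)

/-- walking to `c`, one can avoid a set `C` that is closed under adjacency
inside `X.erase c` and does not contain the start -/
lemma reach_out {X C : Finset V} {c : V} (hC : C ⊆ X.erase c)
    (hclosed : ∀ a b, a ∈ X.erase c → b ∈ C → G.Adj a b → a ∈ C) :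
    ∀ {x}, Relation.ReflTransGen (stepRel G X) x c → x ∉ C →
      Relation.ReflTransGen (stepRel G (X \ C)) x c := by
  intro x h
  induction h using Relation.ReflTransGen.head_induction_on with
  | refl => intro _; exact .refl
  | @head a b hstep hrtg ih =>
      intro haC
      by_cases hac : a = c
      · subst hac; exact .refl
      · by_cases hbC : b ∈ C
        · exact absurd (hclosed a b (mem_erase.2 ⟨hac, hstep.1⟩) hbC hstep.2.2) haC
        · exact (ih hbC).head ⟨mem_sdiff.2 ⟨hstep.1, haC⟩, mem_sdiff.2 ⟨hstep.2.1, hbC⟩, hstep.2.2⟩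

lemma compIn_closed' {X : Finset V} {c y : V} :
    ∀ a b, a ∈ X.erase c → b ∈ compIn G (X.erase c) y → G.Adj a b →
      a ∈ compIn G (X.erase c) y :=
  fun a b ha hb hadj => compIn_closed hb ha hadj.symm

lemma exists_adj_root {X : Finset V} {c : V} :
    ∀ {x}, Relation.ReflTransGen (stepRel G X) x c → x ≠ c →
      ∃ z, z ∈ X.erase c ∧ G.Adj z c ∧
        Relation.ReflTransGen (stepRel G (X.erase c)) x z := by
  intro x h
  induction h using Relation.ReflTransGen.head_induction_on with
  | refl => intro hxc; exact absurd rfl hxc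
  | @head a b hstep hrtg ih =>
      intro hac
      by_cases hbc : b = c
      · subst hbc
        exact ⟨a, mem_erase.2 ⟨hac, hstep.1⟩, hstep.2.2, .refl⟩
      · rcases ih hbc with ⟨z, hz1, hz2, hz3⟩
        exact ⟨z, hz1, hz2, hz3.head
          ⟨mem_erase.2 ⟨hac, hstep.1⟩, mem_erase.2 ⟨hbc, hstep.2.1⟩, hstep.2.2⟩⟩

end Comp


lemma dist_le_two_via {a b m : V} (hconn : G.Connected) (h1 : G.Adj a m) (h2 : G.Adj m b) :
    G.dist a b ≤ 2 :=
  le_trans (hconn.dist_triangle (v := m))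
    (by have := adj_dist_le_one h1; have := adj_dist_le_one h2; omega)

/-- Key carving lemma: from a connected set `X` with distinguished vertex `c` one can
carve a set `A` of any size `q ≤ |X| - 1` avoiding `c`, with `A` connected at
distance two, the rest connected at distance two, and `A` containing a neighbor
of `c` when nonempty. -/
lemma carve (hconn : G.Connected) :
    ∀ (m : ℕ) (X : Finset V), X.card ≤ m → Conn1 G X → ∀ c ∈ X, ∀ q : ℕ, q + 1 ≤ X.card →
      ∃ A : Finset V, A ⊆ X.erase c ∧ A.card = q ∧ Conn2 G A ∧ Conn2 G (X \ A) ∧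
        (1 ≤ q → ∃ z ∈ A, G.Adj c z) := by
  intro m
  induction m with
  | zero => intro X hm _ c _ q hq; omega
  | succ m₀ IH =>
    intro X hm hX c hc q hq
    rcases Nat.eq_zero_or_pos q with hq0 | hq1
    · subst hq0
      refine ⟨∅, empty_subset _, card_empty, ?_, ?_, by omega⟩
      · intro x hx; exact absurd hx (notMem_empty x)
      · rw [sdiff_empty]; exact hX.conn2
    · -- find a neighbor of c in X
      obtain ⟨x, hx, hxc⟩ := Finset.exists_mem_ne (s := X) (by omega) c
      obtain ⟨c₁, hc₁, hc₁adj, _⟩ := exists_adj_root (hX x hx c hc) hxc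
      have hadj : G.Adj c c₁ := hc₁adj.symm
      set Y : Finset V := compIn G (X.erase c) c₁ with hYdef
      have hc₁Y : c₁ ∈ Y := mem_compIn_self hc₁
      have hYsub : Y ⊆ X.erase c := compIn_subset
      have hYsubX : Y ⊆ X := hYsub.trans (erase_subset _ _)
      have hcY : c ∉ Y := fun h => (mem_erase.1 (hYsub h)).1 rfl
      have htpos : 1 ≤ Y.card := card_pos.2 ⟨c₁, hc₁Y⟩
      have hYcard : Y.card ≤ X.card - 1 := by
        have := card_erase_of_mem hc
        have := card_le_card hYsub
        omega
      have hXY : Conn1 G (X \ Y) := by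
        intro a ha b hb
        rcases mem_sdiff.1 ha with ⟨haX, haY⟩
        rcases mem_sdiff.1 hb with ⟨hbX, hbY⟩
        have ra := reach_out hYsub compIn_closed' (hX a haX c hc) haY
        have rb := reach_out hYsub compIn_closed' (hX b hbX c hc) hbY
        exact ra.trans (rtg_symm rb)
      by_cases hcase : Y.card ≤ q
      · -- take all of Y plus a carve from the rest
        have hcX' : c ∈ X \ Y := mem_sdiff.2 ⟨hc, hcY⟩
        have hcardX' : (X \ Y).card = X.card - Y.card := card_sdiff_of_subset hYsubX
        obtain ⟨A', hA'sub, hA'card, hA'c2, hA'rest, hA'nbr⟩ :=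
          IH (X \ Y) (by omega) hXY c hcX' (q - Y.card) (by omega)
        have hA'subXY : A' ⊆ X \ Y := hA'sub.trans (erase_subset _ _)
        have hdisj : Disjoint Y A' := by
          refine Finset.disjoint_left.2 (fun a haY haA => ?_)
          exact (mem_sdiff.1 (hA'subXY haA)).2 haY
        refine ⟨Y ∪ A', ?_, ?_, ?_, ?_, ?_⟩
        · refine union_subset hYsub (hA'sub.trans ?_)
          intro a ha
          rcases mem_erase.1 ha with ⟨h1, h2⟩
          exact mem_erase.2 ⟨h1, (mem_sdiff.1 h2).1⟩
        · rw [card_union_of_disjoint hdisj, hA'card]; omega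
        · -- Conn2 (Y ∪ A')
          rcases Nat.eq_zero_or_pos (q - Y.card) with h0 | hpos
          · have : A' = ∅ := card_eq_zero.1 (by omega)
            subst this
            rw [union_empty]
            exact (conn1_compIn hc₁).conn2
          · obtain ⟨z', hz'A, hz'adj⟩ := hA'nbr hpos
            exact conn2_union (conn1_compIn hc₁).conn2 hA'c2 hc₁Y hz'A
              (dist_le_two_via hconn hc₁adj hz'adj)
        · have hid : X \ (Y ∪ A') = (X \ Y) \ A' := by
            ext a
            simp only [mem_sdiff, mem_union]
            tauto
          rw [hid]; exact hA'rest
        · intro _; exact ⟨c₁, mem_union_left _ hc₁Y, hadj⟩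
      · -- carve the complement of the piece inside Y
        have hY1 : Conn1 G Y := conn1_compIn hc₁
        obtain ⟨A'', hA''sub, hA''card, hA''c2, hA''rest, hA''nbr⟩ :=
          IH Y (by omega) hY1 c₁ hc₁Y (Y.card - q) (by omega)
        obtain ⟨z'', hz''A, hz''adj⟩ := hA''nbr (by omega)
        have hA''Y : A'' ⊆ Y := hA''sub.trans (erase_subset _ _)
        refine ⟨Y \ A'', ?_, ?_, hA''rest, ?_, ?_⟩
        · exact (sdiff_subset).trans hYsub
        · rw [card_sdiff_of_subset hA''Y]; omega
        · have hid : X \ (Y \ A'') = (X \ Y) ∪ A'' := by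
            ext a
            simp only [mem_sdiff, mem_union]
            constructor
            · rintro ⟨haX, h⟩
              by_cases haY : a ∈ Y
              · right; by_contra h2; exact h ⟨haY, h2⟩
              · left; exact ⟨haX, haY⟩
            · rintro (⟨haX, haY⟩ | ha)
              · exact ⟨haX, fun h => haY h.1⟩
              · exact ⟨hYsubX (hA''Y ha), fun h => h.2 ha⟩
          rw [hid]
          exact conn2_union hXY.conn2 hA''c2 (mem_sdiff.2 ⟨hc, hcY⟩) hz''A
            (dist_le_two_via hconn hadj hz''adj)
        · intro _
          exact ⟨c₁, mem_sdiff.2 ⟨hc₁Y, fun h => (mem_erase.1 (hA''sub h)).1 rfl⟩, hadj⟩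


lemma walk_rtg {x y : V} (w : G.Walk x y) :
    Relation.ReflTransGen (stepRel G univ) x y := by
  induction w with
  | nil => exact .refl
  | cons h _ ih => exact ih.head ⟨mem_univ _, mem_univ _, h⟩

lemma conn1_univ (hconn : G.Connected) : Conn1 G univ := by
  intro x _ y _
  rcases hconn x y with ⟨w⟩
  exact walk_rtg w

lemma exists_walk_of_rtg {S : Finset V} {x y : V} (hx : x ∈ S)
    (h : Relation.ReflTransGen (stepRel G S) x y) :
    ∃ w : G.Walk x y, ∀ z ∈ w.support, z ∈ S := by
  induction h with
  | refl => exact ⟨.nil, by simpa using hx⟩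
  | @tail b w hxb hstep ih =>
      rcases ih with ⟨p, hp⟩
      refine ⟨p.concat hstep.2.2, ?_⟩
      intro z hz
      rw [SimpleGraph.Walk.support_concat] at hz
      simp only [List.concat_eq_append, List.mem_append, List.mem_singleton] at hz
      rcases hz with h1 | h1
      · exact hp z h1
      · simpa [h1] using hstep.2.1

/-- In a tree, two distinct neighbors of `c` cannot be joined avoiding `c`. -/
lemma tree_no_detour (hG : G.IsTree) {c c₁ c₂ : V} (h1 : G.Adj c c₁) (h2 : G.Adj c c₂)
    (hne : c₁ ≠ c₂) {S : Finset V} (hcS : c ∉ S) (hc₁S : c₁ ∈ S)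
    (h : Relation.ReflTransGen (stepRel G S) c₁ c₂) : False := by
  obtain ⟨w, hw⟩ := exists_walk_of_rtg hc₁S h
  have hcw : c ∉ w.toPath.1.support := by
    intro hc
    exact hcS (hw c (SimpleGraph.Walk.support_toPath_subset w hc))
  -- the explicit path through c
  have hpath2 : (SimpleGraph.Walk.cons h1.symm h2.toWalk).IsPath := by
    rw [SimpleGraph.Walk.isPath_def]
    simp [SimpleGraph.Walk.support_cons, h1.ne', h2.ne, hne]
  obtain ⟨p, -, hup⟩ := hG.existsUnique_path c₁ c₂
  have e1 := hup _ w.toPath.2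
  have e2 := hup _ hpath2
  have e3 : (w.toPath : G.Walk c₁ c₂) = SimpleGraph.Walk.cons h1.symm h2.toWalk := by
    rw [e1, e2]
  apply hcw
  rw [e3]
  simp [SimpleGraph.Walk.support_cons]


/-- if `P` is a union of components of `univ.erase c`, then `insert c P` is connected -/
lemma conn1_insert_of_closed (hconn : G.Connected) {c : V} {P : Finset V}
    (hP : P ⊆ univ.erase c)
    (hclosed : ∀ y ∈ P, compIn G (univ.erase c) y ⊆ P) :
    Conn1 G (insert c P) := by
  have key : ∀ x ∈ insert c P, Relation.ReflTransGen (stepRel G (insert c P)) x c := by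
    intro x hx
    rcases mem_insert.1 hx with rfl | hxP
    · exact .refl
    · set D := compIn G (univ.erase c) x with hD
      have hDP : D ⊆ P := hclosed x hxP
      have hbase : Relation.ReflTransGen (stepRel G univ) x c :=
        conn1_univ hconn x (mem_univ _) c (mem_univ _)
      have main : ∀ {a}, Relation.ReflTransGen (stepRel G univ) a c → a ∈ D →
          Relation.ReflTransGen (stepRel G (insert c D)) a c := by
        intro a h
        induction h using Relation.ReflTransGen.head_induction_on with
        | refl =>
            intro hcD
            exact absurd rfl (mem_erase.1 (compIn_subset hcD)).1
        | @head a b hstep hrtg ih =>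
            intro haD
            by_cases hbc : b = c
            · subst hbc
              exact .single ⟨mem_insert_of_mem haD, mem_insert_self _ _, hstep.2.2⟩
            · have hbD : b ∈ D := compIn_closed haD (mem_erase.2 ⟨hbc, mem_univ _⟩) hstep.2.2
              exact (ih hbD).head ⟨mem_insert_of_mem haD, mem_insert_of_mem hbD, hstep.2.2⟩
      have hxD : x ∈ D := mem_compIn_self (hP hxP)
      exact rtg_mono (insert_subset_insert c hDP) (main hbase hxD)
  intro x hx y hy
  exact (key x hx).trans (rtg_symm (key y hy))

/-- choice of a splitting vertex and a balanced group of components -/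
lemma exists_balanced_split (hG : G.IsTree) (n : ℕ) (hn : 1 ≤ n)
    (hcard : Fintype.card V = 3 * n) :
    ∃ (c : V) (P : Finset V), P ⊆ univ.erase c ∧ n ≤ P.card ∧ P.card < 2 * n ∧
      Conn1 G (insert c P) ∧ Conn1 G (insert c ((univ.erase c) \ P)) := by
  have hconn := hG.isConnected
  have hVpos : 0 < Fintype.card V := by omega
  have hne : (univ : Finset V).Nonempty := univ_nonempty_iff.2 (Fintype.card_pos_iff.1 hVpos)
  set M : V → ℕ := fun c => (univ.erase c).sup (fun y => (compIn G (univ.erase c) y).card)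
    with hM
  obtain ⟨c, -, hcmin⟩ := Finset.exists_min_image univ M hne
  have hErase : ∀ c' : V, (univ.erase c').card = 3 * n - 1 := by
    intro c'
    rw [card_erase_of_mem (mem_univ _), card_univ, hcard]
  -- the minimizing vertex has all components small
  have hMle : M c < 2 * n := by
    by_contra hMge
    push_neg at hMge
    have hEne : (univ.erase c).Nonempty := by
      rw [← card_pos, hErase]; omega
    obtain ⟨y₀, hy₀, hsup⟩ := Finset.exists_mem_eq_sup (univ.erase c) hEne
      (fun y => (compIn G (univ.erase c) y).card)
    set C := compIn G (univ.erase c) y₀ with hCdef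
    have hCcard : 2 * n ≤ C.card := by
      simp only [hM] at hMge
      rw [hsup] at hMge; exact hMge
    -- a neighbor c' of c inside C
    obtain ⟨c', hc'err, hc'adj, hc'rtg⟩ :=
      exists_adj_root (conn1_univ hconn y₀ (mem_univ _) c (mem_univ _))
        (mem_erase.1 hy₀).1
    have hc'C : c' ∈ C := mem_compIn.2 ⟨hc'err, hc'rtg⟩
    have hadjcc' : G.Adj c c' := hc'adj.symm
    have hMc' : M c' < M c := by
      have hbot : (0 : ℕ) < M c := by omega
      rw [hM]
      refine Finset.sup_lt_iff hbot |>.2 ?_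
      intro y hy
      set W := compIn G (univ.erase c') y with hW
      by_cases hcW : c ∈ W
      · -- W avoids C entirely
        have hdisj : ∀ z ∈ W, z ∉ C := by
          intro z hzW hzC
          have hzc : z ≠ c := (mem_erase.1 (compIn_subset hzC)).1
          have hrtgzc : Relation.ReflTransGen (stepRel G (univ.erase c')) z c :=
            (rtg_symm (mem_compIn.1 hzW).2).trans (mem_compIn.1 hcW).2
          obtain ⟨w', hw'mem, hw'adj, hw'rtg⟩ := exists_adj_root hrtgzc hzc
          have hw'sub : ((univ.erase c').erase c) ⊆ univ.erase c := by
            intro a ha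
            rcases mem_erase.1 ha with ⟨h1, _⟩
            exact mem_erase.2 ⟨h1, mem_univ _⟩
          have hw'C : w' ∈ C :=
            compIn_closed_rtg hzC (hw'sub hw'mem) (rtg_mono hw'sub hw'rtg)
          have hw'ne : c' ≠ w' := by
            rcases mem_erase.1 hw'mem with ⟨-, h2⟩
            exact fun h => (mem_erase.1 h2).1 h.symm
          have hrtg2 : Relation.ReflTransGen (stepRel G (univ.erase c)) c' w' :=
            (rtg_symm (mem_compIn.1 hc'C).2).trans (mem_compIn.1 hw'C).2
          exact tree_no_detour hG hadjcc' hw'adj.symm hw'ne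
            (fun h => (mem_erase.1 h).1 rfl) (compIn_subset hc'C) hrtg2
        have hdisj2 : Disjoint W C := Finset.disjoint_left.2 hdisj
        have : W.card + C.card ≤ 3 * n := by
          rw [← card_union_of_disjoint hdisj2, ← hcard, ← card_univ]
          exact card_le_card (subset_univ _)
        omega
      · -- W is strictly inside C
        have hWsub : W ⊆ C.erase c' := by
          intro z hzW
          have hzc' : z ≠ c' := (mem_erase.1 (compIn_subset hzW)).1
          have hzc : z ≠ c := fun h => hcW (h ▸ hzW)
          have hzC : z ∈ C := by
            by_contra hzC
            have hreach := reach_out (compIn_subset) (compIn_closed' (y := y₀))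
              (conn1_univ hconn z (mem_univ _) c (mem_univ _)) hzC
            have hsub2 : (univ : Finset V) \ C ⊆ univ.erase c' := by
              intro a ha
              rcases mem_sdiff.1 ha with ⟨-, haC⟩
              exact mem_erase.2 ⟨fun h => haC (h ▸ hc'C), mem_univ _⟩
            have : c ∈ W := compIn_closed_rtg hzW
              (mem_erase.2 ⟨hadjcc'.ne, mem_univ _⟩) (rtg_mono hsub2 hreach)
            exact hcW this
          exact mem_erase.2 ⟨hzc', hzC⟩
        have h1 : W.card ≤ C.card - 1 := by
          have := card_le_card hWsub
          rw [card_erase_of_mem hc'C] at this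
          exact this
        have h2 : C.card ≤ M c := by
          simp only [hM, hCdef]
          exact Finset.le_sup (f := fun y => (compIn G (univ.erase c) y).card) hy₀
        omega
    exact absurd (hcmin c' (mem_univ _)) (by omega)
  -- all components of `univ.erase c` have size < 2n; group them
  have hcomp_small : ∀ y ∈ univ.erase c, (compIn G (univ.erase c) y).card < 2 * n := by
    intro y hy
    calc (compIn G (univ.erase c) y).card
        ≤ M c := Finset.le_sup (f := fun y => (compIn G (univ.erase c) y).card) hy
      _ < 2 * n := hMle
  have build : ∀ P : Finset V, P ⊆ univ.erase c →
      (∀ y ∈ P, compIn G (univ.erase c) y ⊆ P) → n ≤ P.card → P.card < 2 * n →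
      ∃ (c' : V) (P' : Finset V), P' ⊆ univ.erase c' ∧ n ≤ P'.card ∧ P'.card < 2 * n ∧
        Conn1 G (insert c' P') ∧ Conn1 G (insert c' ((univ.erase c') \ P')) := by
    intro P hPsub hPclosed hPlow hPhigh
    refine ⟨c, P, hPsub, hPlow, hPhigh, conn1_insert_of_closed hconn hPsub hPclosed, ?_⟩
    refine conn1_insert_of_closed hconn (sdiff_subset) ?_
    intro y hy
    rcases mem_sdiff.1 hy with ⟨hy1, hy2⟩
    intro z hz
    refine mem_sdiff.2 ⟨compIn_subset hz, fun hzP => hy2 ?_⟩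
    have : y ∈ compIn G (univ.erase c) z := (mem_compIn_comm hy1 (compIn_subset hz)).1 hz
    exact hPclosed z hzP this
  by_cases hbig : ∃ y ∈ univ.erase c, n ≤ (compIn G (univ.erase c) y).card
  · obtain ⟨y, hy, hylow⟩ := hbig
    exact build (compIn G (univ.erase c) y) compIn_subset
      (fun z hz => by rw [compIn_eq_of_mem hz]) hylow (hcomp_small y hy)
  · push_neg at hbig
    -- greedy grouping of small components
    set F := (univ.erase c).powerset.filter
      (fun P => (∀ y ∈ P, compIn G (univ.erase c) y ⊆ P) ∧ P.card < 2 * n) with hF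
    have hFne : F.Nonempty := by
      refine ⟨∅, mem_filter.2 ⟨mem_powerset.2 (empty_subset _), ?_, ?_⟩⟩
      · intro y hy; exact absurd hy (notMem_empty y)
      · simp; omega
    obtain ⟨P, hPF, hPmax⟩ := Finset.exists_max_image F card hFne
    rcases mem_filter.1 hPF with ⟨hPsub', hPclosed, hPhigh⟩
    have hPsub : P ⊆ univ.erase c := mem_powerset.1 hPsub'
    have hPlow : n ≤ P.card := by
      by_contra hlt
      push_neg at hlt
      have hsdne : ((univ.erase c) \ P).Nonempty := by
        rw [← card_pos, card_sdiff_of_subset hPsub, hErase]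
        omega
      obtain ⟨y, hy⟩ := hsdne
      rcases mem_sdiff.1 hy with ⟨hy1, hy2⟩
      set P' := P ∪ compIn G (univ.erase c) y with hP'
      have hP'mem : P' ∈ F := by
        refine mem_filter.2 ⟨mem_powerset.2 (union_subset hPsub compIn_subset), ?_, ?_⟩
        · intro z hz
          rcases mem_union.1 hz with h1 | h1
          · exact (hPclosed z h1).trans subset_union_left
          · rw [compIn_eq_of_mem h1]
            exact subset_union_right
        · have h1 : P'.card ≤ P.card + (compIn G (univ.erase c) y).card := by
            rw [hP']; exact card_union_le _ _
          have h2 := hbig y hy1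
          omega
      have hlt2 : P.card < P'.card := by
        refine card_lt_card ⟨subset_union_left, fun hsub => hy2 ?_⟩
        exact hPclosed y (hsub (mem_union_right _ (mem_compIn_self hy1)))
          (mem_compIn_self hy1)
      exact absurd (hPmax P' hP'mem) (by omega)
    exact build P hPsub hPclosed hPlow hPhigh


section Span

variable {W : Type*}

lemma exists_tree_le : ∀ (k : ℕ) (Γ : SimpleGraph W), Γ.edgeSet.ncard ≤ k →
    Γ.edgeSet.Finite → Γ.Connected → ∃ H, H ≤ Γ ∧ H.IsTree := by
  intro k
  induction k with
  | zero =>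
    intro Γ hk hfin hconn
    by_cases hac : Γ.IsAcyclic
    · exact ⟨Γ, le_refl _, ⟨hconn, hac⟩⟩
    · exfalso
      rw [SimpleGraph.isAcyclic_iff_forall_adj_isBridge] at hac
      push_neg at hac
      obtain ⟨v, w, hadj, -⟩ := hac
      have : s(v, w) ∈ Γ.edgeSet := hadj
      have : Γ.edgeSet.Nonempty := ⟨_, this⟩
      have := Set.ncard_pos hfin |>.2 this
      omega
  | succ k ih =>
    intro Γ hk hfin hconn
    by_cases hac : Γ.IsAcyclic
    · exact ⟨Γ, le_refl _, ⟨hconn, hac⟩⟩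
    · rw [SimpleGraph.isAcyclic_iff_forall_adj_isBridge] at hac
      push_neg at hac
      obtain ⟨v, w, hadj, hnb⟩ := hac
      rw [SimpleGraph.isBridge_iff] at hnb
      have hreach : (Γ \ SimpleGraph.fromEdgeSet {s(v, w)}).Reachable v w := by
        by_contra h
        exact hnb h
      set Γ' := Γ \ SimpleGraph.fromEdgeSet {s(v, w)} with hΓ'
      have hle : Γ' ≤ Γ := sdiff_le
      have hstep : ∀ {a b : W}, Γ.Adj a b → Γ'.Reachable a b := by
        intro a b hab
        by_cases he : s(a, b) = s(v, w)
        · rw [Sym2.eq_iff] at he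
          rcases he with ⟨rfl, rfl⟩ | ⟨rfl, rfl⟩
          · exact hreach
          · exact hreach.symm
        · refine SimpleGraph.Adj.reachable ?_
          rw [hΓ', SimpleGraph.sdiff_adj]
          refine ⟨hab, ?_⟩
          rw [SimpleGraph.fromEdgeSet_adj]
          rintro ⟨h1, -⟩
          exact he (by simpa using h1)
      have hpre : Γ'.Preconnected := by
        intro a b
        rcases hconn a b with ⟨p⟩
        clear hk
        induction p with
        | nil => exact SimpleGraph.Reachable.refl _
        | cons h _ ihp => exact (hstep h).trans ihp
      have hconn' : Γ'.Connected := by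
        haveI := hconn.nonempty
        exact ⟨hpre⟩
      have hss : Γ'.edgeSet ⊂ Γ.edgeSet := by
        refine ⟨SimpleGraph.edgeSet_mono hle, fun hsub => ?_⟩
        have h1 : s(v, w) ∈ Γ.edgeSet := hadj
        have h2 : s(v, w) ∉ Γ'.edgeSet := by
          rw [SimpleGraph.mem_edgeSet, hΓ', SimpleGraph.sdiff_adj]
          rintro ⟨-, h⟩
          exact h (by rw [SimpleGraph.fromEdgeSet_adj]; exact ⟨rfl, hadj.ne⟩)
        exact h2 (hsub h1)
      have hlt : Γ'.edgeSet.ncard < Γ.edgeSet.ncard := Set.ncard_lt_ncard hss hfin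
      obtain ⟨H, hle2, htree⟩ := ih Γ' (by omega) (hfin.subset hss.1) hconn'
      exact ⟨H, hle2.trans hle, htree⟩

end Span

/-- every `Conn2` nonempty set carries a suitable tree -/
lemma part_tree (hG : G.IsTree) {S : Finset V} (hS : Conn2 G S) (hne : S.Nonempty) :
    ∃ H : SimpleGraph {x // x ∈ S}, H.IsTree ∧
      ∀ u v : {x // x ∈ S}, H.Adj u v → G.dist u.1 v.1 ≤ 2 := by
  set Γ : SimpleGraph {x // x ∈ S} :=
    { Adj := fun a b => a ≠ b ∧ G.dist a.1 b.1 ≤ 2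
      symm := ⟨by
        rintro a b ⟨h1, h2⟩
        exact ⟨h1.symm, by rwa [SimpleGraph.dist_comm]⟩⟩
      loopless := ⟨by rintro a ⟨h1, -⟩; exact h1 rfl⟩ } with hΓ
  have lift : ∀ {x y : V}, Relation.ReflTransGen (step2Rel G S) x y →
      ∀ (hx : x ∈ S) (hy : y ∈ S), Γ.Reachable ⟨x, hx⟩ ⟨y, hy⟩ := by
    intro x y h
    induction h with
    | refl => intro hx hy; exact SimpleGraph.Reachable.refl _
    | @tail b z hxb hstep ihl =>
        intro hx hz
        refine (ihl hx hstep.1).trans ?_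
        by_cases hbz : b = z
        · subst hbz; exact SimpleGraph.Reachable.refl _
        · exact SimpleGraph.Adj.reachable ⟨by simp [Subtype.ext_iff, hbz], hstep.2.2⟩
  have hΓconn : Γ.Connected := by
    haveI : Nonempty {x // x ∈ S} := ⟨⟨hne.choose, hne.choose_spec⟩⟩
    refine ⟨fun a b => ?_⟩
    have := hS a.1 a.2 b.1 b.2
    have h2 := lift this a.2 b.2
    simpa using h2
  obtain ⟨H, hle, htree⟩ := exists_tree_le Γ.edgeSet.ncard Γ (le_refl _)
    (Set.toFinite _) hΓconn
  exact ⟨H, htree, fun u v h => (hle h).2⟩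

end TreePart


/-- Every tree `G` with `3 * n` vertices (`n ≥ 1`) admits a partition of its
vertex set into three sets of size `n` each, each carrying a tree structure
all of whose edges join vertices at distance at most `2` in `G`. -/
theorem balanced_three_partition_dist_two {V : Type*} [Fintype V] [DecidableEq V]
    (G : SimpleGraph V) (hG : G.IsTree) (n : ℕ) (hn : 1 ≤ n)
    (hcard : Fintype.card V = 3 * n) :
    ∃ P : Fin 3 → Finset V,
      (∀ i j, i ≠ j → Disjoint (P i) (P j)) ∧
      Finset.univ.biUnion P = Finset.univ ∧
      (∀ i, (P i).card = n) ∧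
      (∀ i, ∃ H : SimpleGraph {x // x ∈ P i}, H.IsTree ∧
        ∀ u v : {x // x ∈ P i}, H.Adj u v → G.dist u.1 v.1 ≤ 2) := by
  classical
  open Finset TreePart in
  have hconn := hG.isConnected
  obtain ⟨c, P, hPsub, hPlow, hPhigh, hconnP, hconnQ⟩ :=
    TreePart.exists_balanced_split hG n hn hcard
  set Q : Finset V := (univ.erase c) \ P with hQdef
  have hcP : c ∉ P := fun h => (Finset.mem_erase.1 (hPsub h)).1 rfl
  have hcQ : c ∉ Q := fun h => (Finset.mem_erase.1 (Finset.mem_sdiff.1 h).1).1 rfl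
  have hErase : (univ.erase c).card = 3 * n - 1 := by
    rw [Finset.card_erase_of_mem (Finset.mem_univ _), Finset.card_univ, hcard]
  have hQcard : Q.card = 3 * n - 1 - P.card := by
    rw [hQdef, Finset.card_sdiff_of_subset hPsub, hErase]
  have hPQdisj : Disjoint P Q := Finset.disjoint_sdiff
  set XP : Finset V := insert c P with hXP
  set XQ : Finset V := insert c Q with hXQ
  have hXPcard : XP.card = P.card + 1 := Finset.card_insert_of_notMem hcP
  have hXQcard : XQ.card = Q.card + 1 := Finset.card_insert_of_notMem hcQ
  have hXPerase : XP.erase c = P := by rw [hXP, Finset.erase_insert hcP]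
  have hXQerase : XQ.erase c = Q := by rw [hXQ, Finset.erase_insert hcQ]
  obtain ⟨A, hAsub, hAcard, hAc2, hArest, -⟩ :=
    TreePart.carve hconn (Fintype.card V) XP (Finset.card_le_univ XP) hconnP c
      (Finset.mem_insert_self _ _) n (by omega)
  obtain ⟨A₂, hA₂sub, hA₂card, hA₂c2, hA₂rest, -⟩ :=
    TreePart.carve hconn (Fintype.card V) XQ (Finset.card_le_univ XQ) hconnQ c
      (Finset.mem_insert_self _ _) n (by omega)
  rw [hXPerase] at hAsub
  rw [hXQerase] at hA₂sub
  have hcA : c ∉ A := fun h => hcP (hAsub h)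
  have hcA₂ : c ∉ A₂ := fun h => hcQ (hA₂sub h)
  have hAA₂ : Disjoint A A₂ := hPQdisj.mono hAsub hA₂sub
  set B : Finset V := (XP \ A) ∪ (XQ \ A₂) with hB
  have hcover : ∀ a : V, a = c ∨ a ∈ P ∨ a ∈ Q := by
    intro a
    by_cases hac : a = c
    · exact Or.inl hac
    · have : a ∈ univ.erase c := Finset.mem_erase.2 ⟨hac, Finset.mem_univ _⟩
      by_cases haP : a ∈ P
      · exact Or.inr (Or.inl haP)
      · exact Or.inr (Or.inr (Finset.mem_sdiff.2 ⟨this, haP⟩))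
  have hBeq : B = (univ \ A) \ A₂ := by
    ext a
    simp only [hB, Finset.mem_union, Finset.mem_sdiff, hXP, hXQ, Finset.mem_insert,
      Finset.mem_univ, true_and]
    constructor
    · rintro (⟨h1, h2⟩ | ⟨h1, h2⟩)
      · refine ⟨h2, fun h => ?_⟩
        have haQ := hA₂sub h
        rcases h1 with rfl | h1
        · exact hcQ haQ
        · exact Finset.disjoint_left.1 hPQdisj h1 haQ
      · constructor
        · intro h
          have haP := hAsub h
          rcases h1 with rfl | h1
          · exact hcP haP
          · exact Finset.disjoint_left.1 hPQdisj haP h1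
        · exact h2
    · rintro ⟨h1, h2⟩
      rcases hcover a with rfl | haP | haQ
      · exact Or.inl ⟨Or.inl rfl, h1⟩
      · exact Or.inl ⟨Or.inr haP, h1⟩
      · exact Or.inr ⟨Or.inr haQ, h2⟩
  have hBc2 : TreePart.Conn2 G B := by
    refine TreePart.conn2_union hArest hA₂rest
      (Finset.mem_sdiff.2 ⟨Finset.mem_insert_self _ _, hcA⟩)
      (Finset.mem_sdiff.2 ⟨Finset.mem_insert_self _ _, hcA₂⟩) ?_
    rw [SimpleGraph.dist_self]
    omega
  have hA₂subc : A₂ ⊆ univ \ A :=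
    fun a ha => Finset.mem_sdiff.2 ⟨Finset.mem_univ _, Finset.disjoint_right.1 hAA₂ ha⟩
  have hBcard : B.card = n := by
    rw [hBeq, Finset.card_sdiff_of_subset hA₂subc, Finset.card_sdiff_of_subset (Finset.subset_univ _),
      Finset.card_univ, hcard, hAcard, hA₂card]
    omega
  have hdisjAB : Disjoint A B := by
    rw [hBeq]
    exact Finset.disjoint_left.2
      (fun a haA haB => (Finset.mem_sdiff.1 (Finset.mem_sdiff.1 haB).1).2 haA)
  have hdisjBA₂ : Disjoint B A₂ := by
    rw [hBeq]
    exact Finset.disjoint_left.2 (fun a haB => (Finset.mem_sdiff.1 haB).2)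
  refine ⟨![A, B, A₂], ?_, ?_, ?_, ?_⟩
  · intro i j hij
    fin_cases i <;> fin_cases j <;> simp at hij ⊢ <;>
      first
        | exact hdisjAB | exact hdisjAB.symm
        | exact hAA₂ | exact hAA₂.symm
        | exact hdisjBA₂ | exact hdisjBA₂.symm
  · ext a
    simp only [Finset.mem_biUnion, Finset.mem_univ, iff_true]
    by_cases haA : a ∈ A
    · exact ⟨0, trivial, haA⟩
    · by_cases haA₂ : a ∈ A₂
      · exact ⟨2, trivial, haA₂⟩
      · refine ⟨1, trivial, ?_⟩
        show a ∈ B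
        rw [hBeq]
        exact Finset.mem_sdiff.2 ⟨Finset.mem_sdiff.2 ⟨Finset.mem_univ _, haA⟩, haA₂⟩
  · intro i
    fin_cases i
    · exact hAcard
    · exact hBcard
    · exact hA₂card
  · intro i
    fin_cases i <;>
      simp only [Matrix.cons_val_zero, Matrix.cons_val_one, Matrix.head_cons, Fin.mk_one,
        Fin.isValue, Matrix.cons_val_two, Matrix.tail_cons]
    · have hAne : A.Nonempty := Finset.card_pos.1 (by rw [hAcard]; omega)
      exact TreePart.part_tree hG hAc2 hAne
    · have hBne : B.Nonempty := Finset.card_pos.1 (by rw [hBcard]; omega)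
      exact TreePart.part_tree hG hBc2 hBne
    · have hA₂ne : A₂.Nonempty := Finset.card_pos.1 (by rw [hA₂card]; omega)
      exact TreePart.part_tree hG hA₂c2 hA₂ne
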